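/- arXiv:1707.07914 — 2 statements merged into one kernel-verified Lean document; each statement's English description precedes it below -/
import Mathlib

section
/- Let B be a bipartite graph with vertex classes Z and X ∪ Y which is Y-robust, and let L be an odd positive integer. Let B' be the graph obtained from B by replacing each edge zv of B (z ∈ Z, v ∈ X ∪ Y) by a path P_{zv} of length L, with all these paths internally disjoint (that is, B' is the (L−1)-subdivision of B). Then: B' is a bipartite graph; there exists a unique partition Z' ∪ X' of the set of internal vertices of the paths such that Z ∪ Z' and X ∪ X' ∪ Y form the two vertex classes of B'; and B', viewed as a bipartite graph with classes Z ∪ Z' and (X ∪ X') ∪ Y, is Y-robust. -/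
/-- The internal vertices of the `(L−1)`-subdivision of a bipartite graph given by the
relation `R : Z → W → Prop`: for each edge `(z, w)` there are `L − 1` internal vertices. -/
def SubIntl (Z W : Type) (R : Z → W → Prop) (L : ℕ) : Type :=
  {e : Z × W // R e.1 e.2} × Fin (L - 1)

/-- The vertex set of the `(L−1)`-subdivision. -/
def SubVtx (Z W : Type) (R : Z → W → Prop) (L : ℕ) : Type :=
  Z ⊕ W ⊕ SubIntl Z W R L

/-- One direction of the adjacency of the `(L−1)`-subdivision: along the path replacing
an edge `(z, w)`, vertex `z` is at position `0`, the internal vertex `(e, i)` at position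
`i + 1`, and `w` at position `L`. -/
def preAdj {Z W : Type} (R : Z → W → Prop) (L : ℕ) :
    SubVtx Z W R L → SubVtx Z W R L → Prop
  | Sum.inl z, Sum.inr (Sum.inl w) => L = 1 ∧ R z w
  | Sum.inl z, Sum.inr (Sum.inr (e, i)) => e.1.1 = z ∧ (i : ℕ) = 0
  | Sum.inr (Sum.inl w), Sum.inr (Sum.inr (e, i)) => e.1.2 = w ∧ (i : ℕ) + 2 = L
  | Sum.inr (Sum.inr (e, i)), Sum.inr (Sum.inr (e', j)) => e = e' ∧ (i : ℕ) + 1 = (j : ℕ)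
  | _, _ => False

/-- The `(L−1)`-subdivision, as a simple graph: each edge `zv` of `B` is replaced by a
path `P_{zv}` of length `L`, all paths internally disjoint. -/
def subdiv {Z W : Type} (R : Z → W → Prop) (L : ℕ) : SimpleGraph (SubVtx Z W R L) :=
  SimpleGraph.fromRel (preAdj R L)

/-- Membership in the vertex class `Z ∪ Z'` of the subdivision, where `Z'` is a set of
internal vertices. -/
def inZclass {Z W : Type} {R : Z → W → Prop} {L : ℕ}
    (Z' : Set (SubIntl Z W R L)) : SubVtx Z W R L → Prop
  | Sum.inl _ => True
  | Sum.inr (Sum.inl _) => False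
  | Sum.inr (Sum.inr v) => v ∈ Z'

/-- The canonical Z-side set of internal vertices: odd Fin index. -/
def canonZ (Z W : Type) (R : Z → W → Prop) (L : ℕ) : Set (SubIntl Z W R L) :=
  {p | (p.2 : ℕ) % 2 = 1}

lemma canon_cond {Z W : Type} (R : Z → W → Prop) (L : ℕ) (hodd : Odd L) :
    ∀ a b, (subdiv R L).Adj a b →
      (inZclass (canonZ Z W R L) a ↔ ¬ inZclass (canonZ Z W R L) b) := by
  obtain ⟨m, rfl⟩ := hodd
  suffices H : ∀ a b, preAdj R (2*m+1) a b →
      (inZclass (canonZ Z W R (2*m+1)) a ↔ ¬ inZclass (canonZ Z W R (2*m+1)) b) by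
    intro a b hab
    rw [subdiv, SimpleGraph.fromRel_adj] at hab
    rcases hab.2 with h | h
    · exact H a b h
    · have := H b a h; tauto
  rintro (z | w | ⟨e, i⟩) (z' | w' | ⟨e', j⟩) h <;>
    simp only [preAdj, inZclass, canonZ, Set.mem_setOf_eq] at h ⊢ <;>
    try exact h.elim
  all_goals try obtain ⟨h1, h2⟩ := h
  all_goals try simp only [true_iff, false_iff, not_not, not_false_iff]
  all_goals try exact trivial
  all_goals try omega
  all_goals try (show ¬ ((j : ℕ) % 2 = 1); omega)
  all_goals try (show (j : ℕ) % 2 = 1; omega)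
  all_goals try (show ((i : ℕ) % 2 = 1) ↔ ¬ ((j : ℕ) % 2 = 1))
  all_goals (constructor <;> intro hx <;> omega)

lemma cond_eq_canon {Z W : Type} {R : Z → W → Prop} {L : ℕ} (hodd : Odd L)
    (Z' : Set (SubIntl Z W R L))
    (h : ∀ a b, (subdiv R L).Adj a b → (inZclass Z' a ↔ ¬ inZclass Z' b)) :
    Z' = canonZ Z W R L := by
  have key : ∀ (e : {e : Z × W // R e.1 e.2}) (n : ℕ) (hn : n < L - 1),
      ((e, (⟨n, hn⟩ : Fin (L-1))) ∈ Z' ↔ n % 2 = 1) := by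
    intro e n
    induction n with
    | zero =>
      intro hn
      have hadj : (subdiv R L).Adj (Sum.inl e.1.1)
          (Sum.inr (Sum.inr (e, (⟨0, hn⟩ : Fin (L-1))))) := by
        refine (SimpleGraph.fromRel_adj _ _ _).mpr ?_
        exact ⟨Sum.inl_ne_inr, Or.inl ⟨rfl, rfl⟩⟩
      have h0 := h _ _ hadj
      simp only [inZclass, true_iff] at h0
      simp; exact h0
    | succ k ih =>
      intro hn
      have hk : k < L - 1 := by omega
      have hadj : (subdiv R L).Adj (Sum.inr (Sum.inr (e, (⟨k, hk⟩ : Fin (L-1)))))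
          (Sum.inr (Sum.inr (e, (⟨k+1, hn⟩ : Fin (L-1))))) := by
        refine (SimpleGraph.fromRel_adj _ _ _).mpr ?_
        refine ⟨?_, Or.inl ⟨rfl, rfl⟩⟩
        intro hcon
        have h4 := congrArg (fun x : SubVtx Z W R L => match x with
          | Sum.inr (Sum.inr (_, i)) => (i : ℕ)
          | _ => 0) hcon
        simp only [] at h4
        omega
      have h1 := h _ _ hadj
      simp only [inZclass] at h1
      have h2 := ih hk
      replace h1 := h2.symm.trans h1
      have h3 : (e, (⟨k+1, hn⟩ : Fin (L-1))) ∈ Z' ↔ ¬ (k % 2 = 1) := by tauto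
      rw [h3]; constructor <;> intro hx <;> omega
  ext ⟨e, i⟩
  have := key e i.val i.isLt
  exact this
section
variable {Z W : Type} {R : Z → W → Prop} {L : ℕ}

def zclEquiv (S : Set (SubIntl Z W R L)) :
    {v : SubVtx Z W R L // inZclass S v} ≃ Z ⊕ {p : SubIntl Z W R L // p ∈ S} where
  toFun := fun
    | ⟨Sum.inl z, _⟩ => Sum.inl z
    | ⟨Sum.inr (Sum.inl _), hw⟩ => hw.elim
    | ⟨Sum.inr (Sum.inr p), hp⟩ => Sum.inr ⟨p, hp⟩
  invFun := fun
    | Sum.inl z => ⟨Sum.inl z, trivial⟩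
    | Sum.inr ⟨p, hp⟩ => ⟨Sum.inr (Sum.inr p), hp⟩
  left_inv := fun
    | ⟨Sum.inl _, _⟩ => rfl
    | ⟨Sum.inr (Sum.inl _), hw⟩ => hw.elim
    | ⟨Sum.inr (Sum.inr _), _⟩ => rfl
  right_inv := fun
    | Sum.inl _ => rfl
    | Sum.inr ⟨_, _⟩ => rfl

def xclEquiv (S : Set (SubIntl Z W R L)) :
    {v : SubVtx Z W R L // ¬ inZclass S v} ≃ W ⊕ {p : SubIntl Z W R L // p ∉ S} where
  toFun := fun
    | ⟨Sum.inl _, hz⟩ => (hz trivial).elim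
    | ⟨Sum.inr (Sum.inl w), _⟩ => Sum.inl w
    | ⟨Sum.inr (Sum.inr p), hp⟩ => Sum.inr ⟨p, hp⟩
  invFun := fun
    | Sum.inl w => ⟨Sum.inr (Sum.inl w), fun h => h⟩
    | Sum.inr ⟨p, hp⟩ => ⟨Sum.inr (Sum.inr p), hp⟩
  left_inv := fun
    | ⟨Sum.inl _, hz⟩ => (hz trivial).elim
    | ⟨Sum.inr (Sum.inl _), _⟩ => rfl
    | ⟨Sum.inr (Sum.inr _), _⟩ => rfl
  right_inv := fun
    | Sum.inl _ => rfl
    | Sum.inr ⟨_, _⟩ => rfl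

def intlEquiv (φ : ℕ → Prop) :
    {p : SubIntl Z W R L // φ (p.2 : ℕ)} ≃
      {e : Z × W // R e.1 e.2} × {i : Fin (L - 1) // φ (i : ℕ)} where
  toFun := fun ⟨(e, i), h⟩ => (e, ⟨i, h⟩)
  invFun := fun (e, ⟨i, h⟩) => ⟨(e, i), h⟩
  left_inv := fun ⟨(_, _), _⟩ => rfl
  right_inv := fun (_, ⟨_, _⟩) => rfl

def parityEquiv (hodd : Odd L) :
    {i : Fin (L - 1) // (i : ℕ) % 2 = 1} ≃ {i : Fin (L - 1) // ¬ (i : ℕ) % 2 = 1} where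
  toFun i := ⟨⟨(i : ℕ) - 1, by obtain ⟨m, rfl⟩ := hodd; have := i.1.isLt; omega⟩,
    by have := i.2; simp only [Fin.val_mk]; omega⟩
  invFun i := ⟨⟨(i : ℕ) + 1, by obtain ⟨m, rfl⟩ := hodd; have := i.1.isLt; have := i.2; omega⟩,
    by have := i.2; simp only [Fin.val_mk]; omega⟩
  left_inv i := by
    have := i.2
    apply Subtype.ext; apply Fin.ext; simp only [Fin.val_mk]; omega
  right_inv i := by
    have := i.2
    apply Subtype.ext; apply Fin.ext; simp only [Fin.val_mk]; omega

end
section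
variable {Z W : Type} [DecidableEq W] {R : Z → W → Prop} {L : ℕ}

def subXi (hodd : Odd L) (ξ₀ : Z → W) (hR : ∀ z, R z (ξ₀ z)) :
    {v : SubVtx Z W R L // inZclass (canonZ Z W R L) v} → Z ⊕ W ⊕ SubIntl Z W R L
  | ⟨Sum.inl z, _⟩ =>
      if h1 : L = 1 then Sum.inr (Sum.inl (ξ₀ z))
      else Sum.inr (Sum.inr (⟨(z, ξ₀ z), hR z⟩,
        ⟨0, by obtain ⟨m, rfl⟩ := hodd; omega⟩))
  | ⟨Sum.inr (Sum.inl _), hw⟩ => hw.elim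
  | ⟨Sum.inr (Sum.inr (e, i)), _⟩ =>
      if ξ₀ (e : Z × W).1 = (e : Z × W).2 then
        if hL : (i : ℕ) + 2 = L then Sum.inr (Sum.inl (e : Z × W).2)
        else Sum.inr (Sum.inr (e, ⟨(i : ℕ) + 1, by have := i.isLt; omega⟩))
      else Sum.inr (Sum.inr (e, ⟨(i : ℕ) - 1, by have := i.isLt; omega⟩))

lemma subXi_adj (hodd : Odd L) (ξ₀ : Z → W) (hR : ∀ z, R z (ξ₀ z))
    (v : {v : SubVtx Z W R L // inZclass (canonZ Z W R L) v}) :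
    (subdiv R L).Adj v.1 (subXi hodd ξ₀ hR v) := by
  obtain ⟨u, hu⟩ := v
  refine (SimpleGraph.fromRel_adj _ _ _).mpr ?_
  match u, hu with
  | Sum.inl z, _ =>
    by_cases h1 : L = 1
    · simp only [subXi, dif_pos h1]
      exact ⟨Sum.inl_ne_inr, Or.inl ⟨h1, hR z⟩⟩
    · simp only [subXi, dif_neg h1]
      exact ⟨Sum.inl_ne_inr, Or.inl ⟨rfl, rfl⟩⟩
  | Sum.inr (Sum.inl _), hw => exact hw.elim
  | Sum.inr (Sum.inr (e, i)), hi =>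
    have hi' : (i : ℕ) % 2 = 1 := hi
    by_cases hm : ξ₀ (e : Z × W).1 = (e : Z × W).2
    · by_cases hL : (i : ℕ) + 2 = L
      · simp only [subXi, if_pos hm, dif_pos hL]
        refine ⟨?_, Or.inr ⟨rfl, hL⟩⟩
        intro hcon
        have h4 := congrArg (fun x : SubVtx Z W R L => match x with
          | Sum.inr (Sum.inr _) => 2
          | _ => 0) hcon
        simp only [] at h4
        omega
      · simp only [subXi, if_pos hm, dif_neg hL]
        refine ⟨?_, Or.inl ⟨rfl, rfl⟩⟩
        intro hcon
        have h4 := congrArg (fun x : SubVtx Z W R L => match x with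
          | Sum.inr (Sum.inr (_, j)) => (j : ℕ)
          | _ => 0) hcon
        simp only [] at h4
        omega
    · simp only [subXi, if_neg hm]
      refine ⟨?_, Or.inr ⟨rfl, by show (i : ℕ) - 1 + 1 = (i : ℕ); omega⟩⟩
      intro hcon
      have h4 := congrArg (fun x : SubVtx Z W R L => match x with
        | Sum.inr (Sum.inr (_, j)) => (j : ℕ)
        | _ => 0) hcon
      simp only [] at h4
      omega

end
section
variable {Z W : Type} [DecidableEq W] {R : Z → W → Prop} {L : ℕ}

lemma subXi_inj (hodd : Odd L) (ξ₀ : Z → W) (hR : ∀ z, R z (ξ₀ z))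
    (hinj : Function.Injective ξ₀) :
    Function.Injective (subXi hodd ξ₀ hR) := by
  rintro ⟨(z | w | ⟨e, i⟩), hu⟩ ⟨(z' | w' | ⟨e', j⟩), hu'⟩ h <;>
    try (first | exact hu.elim | exact hu'.elim)
  · -- z, z'
    refine Subtype.ext ?_
    simp only [subXi] at h
    split_ifs at h with h1
    · have := hinj (Sum.inl.inj (Sum.inr.inj h))
      rw [this]
    · have hd := Sum.inr.inj (Sum.inr.inj h)
      have he := congrArg (fun p => (p.1 : Z × W).1) hd
      simp only [] at he
      rw [he]
  · -- z, (e',j)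
    exfalso
    by_cases h1 : L = 1
    · exact absurd j.isLt (by omega)
    have hj : (j : ℕ) % 2 = 1 := hu'
    simp only [subXi, dif_neg h1] at h
    split_ifs at h with hm hL
    · have h4 := congrArg (fun x : SubVtx Z W R L => match x with
        | Sum.inr (Sum.inr _) => 2 | _ => 0) h
      simp only [] at h4
      omega
    · have hd := Sum.inr.inj (Sum.inr.inj h)
      have hij : (0 : ℕ) = (j : ℕ) + 1 :=
        congrArg (fun p => ((p.2 : Fin (L-1)) : ℕ)) hd
      omega
    · have hd := Sum.inr.inj (Sum.inr.inj h)
      have he : (z, ξ₀ z) = (e' : Z × W) := congrArg (fun p => (p.1 : Z × W)) hd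
      exact hm (by rw [← he])
  · -- (e,i), z'
    exfalso
    by_cases h1 : L = 1
    · exact absurd i.isLt (by omega)
    have hi : (i : ℕ) % 2 = 1 := hu
    simp only [subXi, dif_neg h1] at h
    split_ifs at h with hm hL
    · have h4 := congrArg (fun x : SubVtx Z W R L => match x with
        | Sum.inr (Sum.inr _) => 2 | _ => 0) h
      simp only [] at h4
      omega
    · have hd := Sum.inr.inj (Sum.inr.inj h)
      have hij : (i : ℕ) + 1 = (0 : ℕ) :=
        congrArg (fun p => ((p.2 : Fin (L-1)) : ℕ)) hd
      omega
    · have hd := Sum.inr.inj (Sum.inr.inj h)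
      have he : (e : Z × W) = (z', ξ₀ z') := congrArg (fun p => (p.1 : Z × W)) hd
      exact hm (by rw [he])
  · -- (e,i), (e',j)
    refine Subtype.ext ?_; show Sum.inr (Sum.inr (e, i)) = Sum.inr (Sum.inr (e', j))
    have hi : (i : ℕ) % 2 = 1 := hu
    have hj : (j : ℕ) % 2 = 1 := hu'
    by_cases hm : ξ₀ (e : Z × W).1 = (e : Z × W).2 <;>
      by_cases hm' : ξ₀ (e' : Z × W).1 = (e' : Z × W).2
    · by_cases hL : (i : ℕ) + 2 = L <;> by_cases hL' : (j : ℕ) + 2 = L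
      · simp only [subXi, if_pos hm, if_pos hm', dif_pos hL, dif_pos hL'] at h
        have hw := Sum.inl.inj (Sum.inr.inj h)
        have hz : (e : Z × W).1 = (e' : Z × W).1 := hinj (by rw [hm, hm', hw])
        have heq : e = e' := Subtype.ext (Prod.ext_iff.mpr ⟨hz, hw⟩)
        have hij : i = j := Fin.ext (by omega)
        rw [heq, hij]
      · exfalso
        simp only [subXi, if_pos hm, if_pos hm', dif_pos hL, dif_neg hL'] at h
        have h4 := congrArg (fun x : SubVtx Z W R L => match x with
          | Sum.inr (Sum.inr _) => 2 | _ => 0) h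
        simp only [] at h4
        omega
      · exfalso
        simp only [subXi, if_pos hm, if_pos hm', dif_neg hL, dif_pos hL'] at h
        have h4 := congrArg (fun x : SubVtx Z W R L => match x with
          | Sum.inr (Sum.inr _) => 2 | _ => 0) h
        simp only [] at h4
        omega
      · simp only [subXi, if_pos hm, if_pos hm', dif_neg hL, dif_neg hL'] at h
        have hd := Sum.inr.inj (Sum.inr.inj h)
        obtain ⟨he, hij⟩ := Prod.ext_iff.mp hd
        have he' : e = e' := he
        have hv : (i : ℕ) + 1 = (j : ℕ) + 1 := congrArg Fin.val hij
        rw [he', Fin.ext (by omega : (i : ℕ) = (j : ℕ))]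
    · exfalso
      simp only [subXi, if_pos hm, if_neg hm'] at h
      by_cases hL : (i : ℕ) + 2 = L
      · simp only [dif_pos hL] at h
        have h4 := congrArg (fun x : SubVtx Z W R L => match x with
          | Sum.inr (Sum.inr _) => 2 | _ => 0) h
        simp only [] at h4
        omega
      · simp only [dif_neg hL] at h
        have hd := Sum.inr.inj (Sum.inr.inj h)
        obtain ⟨he, -⟩ := Prod.ext_iff.mp hd
        have he' : e = e' := he
        exact hm' (by rw [← he', hm])
    · exfalso
      simp only [subXi, if_neg hm, if_pos hm'] at h
      by_cases hL' : (j : ℕ) + 2 = L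
      · simp only [dif_pos hL'] at h
        have h4 := congrArg (fun x : SubVtx Z W R L => match x with
          | Sum.inr (Sum.inr _) => 2 | _ => 0) h
        simp only [] at h4
        omega
      · simp only [dif_neg hL'] at h
        have hd := Sum.inr.inj (Sum.inr.inj h)
        obtain ⟨he, -⟩ := Prod.ext_iff.mp hd
        have he' : e = e' := he
        exact hm (by rw [he', hm'])
    · simp only [subXi, if_neg hm, if_neg hm'] at h
      have hd := Sum.inr.inj (Sum.inr.inj h)
      obtain ⟨he, hij⟩ := Prod.ext_iff.mp hd
      have he' : e = e' := he
      have hv : (i : ℕ) - 1 = (j : ℕ) - 1 := congrArg Fin.val hij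
      rw [he', Fin.ext (by omega : (i : ℕ) = (j : ℕ))]

end
section
variable {Z W : Type} [Fintype W] [DecidableEq W] {R : Z → W → Prop} {L : ℕ}

lemma subXi_range (hodd : Odd L) (ξ₀ : Z → W) (hR : ∀ z, R z (ξ₀ z))
    (X Y Y' : Finset W) (hdisj : Disjoint X Y) (hcover : X ∪ Y = Finset.univ)
    (hY'Y : Y' ⊆ Y) (hrange : Set.range ξ₀ = ↑(X ∪ Y')) :
    Set.range (subXi hodd ξ₀ hR) =
      ({v | ¬ inZclass (canonZ Z W R L) v} \
          {v | ∃ y ∈ Y, v = Sum.inr (Sum.inl y)}) ∪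
        {v | ∃ y ∈ Y', v = Sum.inr (Sum.inl y)} := by
  have hodd' := hodd
  obtain ⟨m, rfl⟩ := hodd'
  -- every w-vertex coming from ξ₀ is in the RHS
  have hWmem : ∀ z : Z, (Sum.inr (Sum.inl (ξ₀ z)) : SubVtx Z W R (2*m+1)) ∈
      ({v | ¬ inZclass (canonZ Z W R (2*m+1)) v} \
          {v | ∃ y ∈ Y, v = Sum.inr (Sum.inl y)}) ∪
        {v | ∃ y ∈ Y', v = Sum.inr (Sum.inl y)} := by
    intro z
    have hx : ξ₀ z ∈ (↑(X ∪ Y') : Set W) := hrange ▸ Set.mem_range_self z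
    rw [Finset.mem_coe, Finset.mem_union] at hx
    rcases hx with hx | hx
    · left
      refine ⟨fun h => h, ?_⟩
      rintro ⟨y, hy, heq⟩
      have : ξ₀ z = y := Sum.inl.inj (Sum.inr.inj heq)
      exact Finset.disjoint_left.mp hdisj hx (this ▸ hy)
    · right
      exact ⟨ξ₀ z, hx, rfl⟩
  -- every even internal vertex is in the RHS
  have hImem : ∀ (e : {e : Z × W // R e.1 e.2}) (k : Fin (2*m+1-1)),
      (k : ℕ) % 2 = 0 → (Sum.inr (Sum.inr (e, k)) : SubVtx Z W R (2*m+1)) ∈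
      ({v | ¬ inZclass (canonZ Z W R (2*m+1)) v} \
          {v | ∃ y ∈ Y, v = Sum.inr (Sum.inl y)}) ∪
        {v | ∃ y ∈ Y', v = Sum.inr (Sum.inl y)} := by
    intro e k hk
    left
    refine ⟨fun h => by have : (k : ℕ) % 2 = 1 := h; omega, ?_⟩
    rintro ⟨y, hy, heq⟩
    have h4 := congrArg (fun x : SubVtx Z W R (2*m+1) => match x with
      | Sum.inr (Sum.inr _) => 2 | _ => 0) heq
    simp only [] at h4
    omega
  -- every w-vertex with w ∈ X ∪ Y' is in the range
  have key : ∀ w : W, w ∈ X ∪ Y' →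
      (Sum.inr (Sum.inl w) : SubVtx Z W R (2*m+1)) ∈ Set.range (subXi hodd ξ₀ hR) := by
    intro w hw
    have : w ∈ Set.range ξ₀ := by rw [hrange]; exact hw
    obtain ⟨z, rfl⟩ := this
    by_cases h1 : 2*m+1 = 1
    · exact ⟨⟨Sum.inl z, trivial⟩, by simp only [subXi, dif_pos h1]⟩
    · refine ⟨⟨Sum.inr (Sum.inr (⟨(z, ξ₀ z), hR z⟩,
        ⟨2*m+1-2, by omega⟩)), show (2*m+1-2) % 2 = 1 by omega⟩, ?_⟩
      have hcond : ξ₀ ((⟨(z, ξ₀ z), hR z⟩ : {e : Z × W // R e.1 e.2}) : Z × W).1 =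
          ((⟨(z, ξ₀ z), hR z⟩ : {e : Z × W // R e.1 e.2}) : Z × W).2 := rfl
      simp only [subXi, if_true]
      rw [dif_pos (show 2*m+1-2+2 = 2*m+1 by omega)]
  apply Set.ext
  intro v
  constructor
  · rintro ⟨⟨(z | w | ⟨e, i⟩), hu⟩, rfl⟩
    · by_cases h1 : 2*m+1 = 1
      · simp only [subXi, dif_pos h1]
        exact hWmem z
      · simp only [subXi, dif_neg h1]
        exact hImem _ _ (by simp only [Fin.val_mk])
    · exact hu.elim
    · have hi : (i : ℕ) % 2 = 1 := hu
      by_cases hm : ξ₀ (e : Z × W).1 = (e : Z × W).2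
      · by_cases hL : (i : ℕ) + 2 = 2*m+1
        · simp only [subXi, if_pos hm, dif_pos hL]
          have : (e : Z × W).2 = ξ₀ (e : Z × W).1 := hm.symm
          rw [this]
          exact hWmem _
        · simp only [subXi, if_pos hm, dif_neg hL]
          exact hImem _ _ (by simp only [Fin.val_mk]; omega)
      · simp only [subXi, if_neg hm]
        exact hImem _ _ (by simp only [Fin.val_mk]; omega)
  · rintro (⟨hnin, hny⟩ | ⟨y, hy, rfl⟩)
    swap
    · exact key y (Finset.mem_union_right _ hy)
    match v, hnin with
    | Sum.inl z, hnin => exact absurd trivial hnin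
    | Sum.inr (Sum.inl w), hnin =>
      have hwY : w ∉ Y := fun hw => hny ⟨w, hw, rfl⟩
      have hwX : w ∈ X := by
        have : w ∈ X ∪ Y := hcover ▸ Finset.mem_univ w
        rcases Finset.mem_union.mp this with h | h
        · exact h
        · exact absurd h hwY
      exact key w (Finset.mem_union_left _ hwX)
    | Sum.inr (Sum.inr (e, i)), hnin =>
      have hi : (i : ℕ) % 2 = 0 := by
        by_contra hcon
        exact hnin (show (i : ℕ) % 2 = 1 by omega)
      have hlt := i.isLt
      by_cases hm : ξ₀ (e : Z × W).1 = (e : Z × W).2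
      · by_cases hz : (i : ℕ) = 0
        · refine ⟨⟨Sum.inl (e : Z × W).1, trivial⟩, ?_⟩
          simp only [subXi]
          rw [dif_neg (show ¬(2*m+1 = 1) by omega)]
          apply congrArg Sum.inr
          apply congrArg Sum.inr
          exact Prod.ext_iff.mpr
            ⟨Subtype.ext (Prod.ext_iff.mpr ⟨rfl, hm⟩),
             Fin.ext (show (0 : ℕ) = (i : ℕ) by omega)⟩
        · refine ⟨⟨Sum.inr (Sum.inr (e, ⟨(i : ℕ) - 1, by omega⟩)),
            show ((i : ℕ) - 1) % 2 = 1 by omega⟩, ?_⟩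
          simp only [subXi]
          rw [if_pos hm, dif_neg (show ¬((i : ℕ) - 1 + 2 = 2*m+1) by omega)]
          apply congrArg Sum.inr
          apply congrArg Sum.inr
          exact Prod.ext_iff.mpr ⟨rfl,
            Fin.ext (show (i : ℕ) - 1 + 1 = (i : ℕ) by omega)⟩
      · refine ⟨⟨Sum.inr (Sum.inr (e, ⟨(i : ℕ) + 1, by omega⟩)),
          show ((i : ℕ) + 1) % 2 = 1 by omega⟩, ?_⟩
        simp only [subXi]
        rw [if_neg hm]
        apply congrArg Sum.inr
        apply congrArg Sum.inr
        exact Prod.ext_iff.mpr ⟨rfl,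
          Fin.ext (show (i : ℕ) + 1 - 1 = (i : ℕ) by omega)⟩
end

/-- **Lemma 5.5 (subdividing a robust bipartite graph).**
Let `B` (given by the relation `R` between `Z` and `W = X ∪ Y`) be a `Y`-robust bipartite
graph and let `L` be odd. Let `B'` be the `(L−1)`-subdivision of `B`. Then `B'` is
bipartite: there is a *unique* partition `Z' ∪ X'` of the internal vertices such that
`Z ∪ Z'` and `X ∪ X' ∪ Y` are the two vertex classes of `B'`; moreover `B'`, with these
classes, is `Y`-robust. -/
theorem subdivision_robust {Z W : Type} [Fintype Z] [Fintype W] [DecidableEq W]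
    (R : Z → W → Prop) (X Y : Finset W)
    (hdisj : Disjoint X Y) (hcover : X ∪ Y = Finset.univ)
    (hXZ : X.card < Fintype.card Z)
    (hZXY : Fintype.card Z < X.card + Y.card)
    (hrob : ∀ Y' ⊆ Y, Y'.card = Fintype.card Z - X.card →
      ∃ ξ : Z → W, Function.Injective ξ ∧ (∀ z, R z (ξ z)) ∧
        Set.range ξ = ↑(X ∪ Y'))
    (L : ℕ) (hodd : Odd L) :
    -- `B'` is bipartite, with a unique partition of the internal vertices into `Z' ∪ X'`
    -- making `Z ∪ Z'` and `X ∪ X' ∪ Y` its vertex classes: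
    (∃! Z' : Set (SubIntl Z W R L),
      ∀ a b, (subdiv R L).Adj a b → (inZclass Z' a ↔ ¬ inZclass Z' b)) ∧
    -- and for this partition, `B'` is `Y`-robust:
    ∀ Z' : Set (SubIntl Z W R L),
      (∀ a b, (subdiv R L).Adj a b → (inZclass Z' a ↔ ¬ inZclass Z' b)) →
      ∀ Y' ⊆ Y,
        Y'.card = {v | inZclass Z' v}.ncard - ({v | ¬ inZclass Z' v}.ncard - Y.card) →
        ∃ ξ : {v : SubVtx Z W R L // inZclass Z' v} → SubVtx Z W R L,
          Function.Injective ξ ∧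
          (∀ v, (subdiv R L).Adj v.1 (ξ v)) ∧
          Set.range ξ =
            ({v | ¬ inZclass Z' v} \ {v | ∃ y ∈ Y, v = Sum.inr (Sum.inl y)}) ∪
              {v | ∃ y ∈ Y', v = Sum.inr (Sum.inl y)} := by
  classical
  haveI hfI : Finite (SubIntl Z W R L) :=
    inferInstanceAs (Finite ({e : Z × W // R e.1 e.2} × Fin (L - 1)))
  constructor
  · exact ⟨canonZ Z W R L, canon_cond R L hodd, fun S hS => cond_eq_canon hodd S hS⟩
  · intro Z' hZ' Y' hY'Y hY'card
    have hcan : Z' = canonZ Z W R L := cond_eq_canon hodd Z' hZ'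
    subst hcan
    have h1 : Nat.card ↥{v : SubVtx Z W R L | inZclass (canonZ Z W R L) v}
        = Nat.card (Z ⊕ {p : SubIntl Z W R L // (p.2 : ℕ) % 2 = 1}) :=
      Nat.card_congr (zclEquiv _)
    have h2 : Nat.card ↥{v : SubVtx Z W R L | ¬ inZclass (canonZ Z W R L) v}
        = Nat.card (W ⊕ {p : SubIntl Z W R L // ¬ (p.2 : ℕ) % 2 = 1}) :=
      Nat.card_congr (xclEquiv _)
    have hZcl : {v : SubVtx Z W R L | inZclass (canonZ Z W R L) v}.ncard
        = Fintype.card Z + Nat.card {p : SubIntl Z W R L // (p.2 : ℕ) % 2 = 1} := by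
      rw [← Nat.card_coe_set_eq, h1, Nat.card_sum, Nat.card_eq_fintype_card]
    have hXcl : {v : SubVtx Z W R L | ¬ inZclass (canonZ Z W R L) v}.ncard
        = Fintype.card W + Nat.card {p : SubIntl Z W R L // ¬ (p.2 : ℕ) % 2 = 1} := by
      rw [← Nat.card_coe_set_eq, h2, Nat.card_sum, Nat.card_eq_fintype_card]
    have hparity : Nat.card {p : SubIntl Z W R L // (p.2 : ℕ) % 2 = 1}
        = Nat.card {p : SubIntl Z W R L // ¬ (p.2 : ℕ) % 2 = 1} := by
      rw [Nat.card_congr (intlEquiv (fun n => n % 2 = 1)),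
        Nat.card_congr (intlEquiv (fun n => ¬ n % 2 = 1)),
        Nat.card_prod, Nat.card_prod]
      exact congrArg _ (Nat.card_congr (parityEquiv hodd))
    have hW : Fintype.card W = X.card + Y.card := by
      rw [← Finset.card_univ, ← hcover, Finset.card_union_of_disjoint hdisj]
    have hY'c : Y'.card = Fintype.card Z - X.card := by
      rw [hZcl, hXcl, hW] at hY'card
      omega
    obtain ⟨ξ₀, hinj, hRz, hrange⟩ := hrob Y' hY'Y hY'c
    exact ⟨subXi hodd ξ₀ hRz, subXi_inj hodd ξ₀ hRz hinj, subXi_adj hodd ξ₀ hRz,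
      subXi_range hodd ξ₀ hRz X Y Y' hdisj hcover hY'Y hrange⟩
end

section
/- Let Δ ≥ 3 be an integer, let F be a graph with maximum degree at most Δ, and let Γ ⊆ V(F) be a subset of size |Γ| ≤ Δ. Then m_1(F_Γ^+) ≤ Δ − 1/2, where F_Γ^+ is the graph obtained from F by adding 3 new vertices, each joined to all vertices of Γ. -/
/-- The maximum 1-density `m₁(F) = max { e(F') / (v(F') − 1) : F' ⊆ F, v(F') ≥ 2 }`. -/
noncomputable def m1 {V : Type*} (F : SimpleGraph V) : ℝ :=
  sSup {x : ℝ | ∃ F' : F.Subgraph, 2 ≤ F'.verts.ncard ∧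
    x = (F'.edgeSet.ncard : ℝ) / ((F'.verts.ncard : ℝ) - 1)}

/-- The graph `F_Γ^+`, obtained from `F` by adding `3` new vertices, each joined to all
vertices of `Γ`. -/
def FGammaPlus {V : Type*} (F : SimpleGraph V) (Γ : Set V) :
    SimpleGraph (V ⊕ Fin 3) :=
  SimpleGraph.fromRel fun a b =>
    match a, b with
    | Sum.inl u, Sum.inl v => F.Adj u v
    | Sum.inl u, Sum.inr _ => u ∈ Γ
    | _, _ => False

/-- The key arithmetic inequality. -/
lemma FGP_arith (Δ a b : ℕ) (hΔ : 3 ≤ Δ) (hb : b ≤ 3) (hab : 2 ≤ a + b) :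
    a * min Δ (a - 1) + 2 * (b * min Δ a) ≤ (2 * Δ - 1) * (a + b - 1) := by
  obtain ⟨D, hD⟩ : ∃ D, 2 * Δ = D + 1 := ⟨2 * Δ - 1, by omega⟩
  have hD' : 2 * Δ - 1 = D := by omega
  rw [hD']
  match a, hab with
  | 0, _ =>
    simp only [Nat.zero_sub, Nat.min_zero, Nat.mul_zero, Nat.zero_mul, Nat.mul_zero, Nat.zero_add]
    omega
  | 1, _ =>
    have h1 : min Δ 1 = 1 := by omega
    have h0 : min Δ (1 - 1) = 0 := by omega
    rw [h1, h0]
    have hb1 : 1 ≤ b := by omega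
    have : 1 + b - 1 = b := by omega
    rw [this]
    nlinarith
  | 2, _ =>
    have h1 : min Δ 2 = 2 := by omega
    have h0 : min Δ (2 - 1) = 1 := by omega
    rw [h1, h0]
    have : 2 + b - 1 = b + 1 := by omega
    rw [this]
    nlinarith
  | (a' + 3), _ =>
    have hs : a' + 3 + b - 1 = a' + b + 2 := by omega
    rw [hs]
    rcases le_or_gt (a' + 3) Δ with h | h
    · have h1 : min Δ (a' + 3 - 1) = a' + 2 := by omega
      have h2 : min Δ (a' + 3) = a' + 3 := by omega
      rw [h1, h2]
      have step : (a' + 3) * (a' + 2) + 2 * (b * (a' + 3)) ≤ (2 * a' + 5) * (a' + b + 2) := by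
        nlinarith
      have step2 : (2 * a' + 5) * (a' + b + 2) ≤ D * (a' + b + 2) := by
        have : 2 * a' + 5 ≤ D := by omega
        exact Nat.mul_le_mul_right _ this
      omega
    · have h1 : min Δ (a' + 3 - 1) = Δ := by omega
      have h2 : min Δ (a' + 3) = Δ := by omega
      rw [h1, h2]
      have ha1 : 1 ≤ a' := by omega
      nlinarith

/-- Degree-sum bound for a graph with all degrees at most `D`. -/
lemma FGP_twice_card_le {W : Type*} [Fintype W] (G : SimpleGraph W) (D : ℕ)
    (h : ∀ v, {u | G.Adj v u}.ncard ≤ D) :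
    2 * G.edgeSet.ncard ≤ Fintype.card W * min D (Fintype.card W - 1) := by
  classical
  have hcard : G.edgeSet.ncard = G.edgeFinset.card := by
    rw [← SimpleGraph.coe_edgeFinset, Set.ncard_coe_finset]
  rw [hcard, ← G.sum_degrees_eq_twice_card_edges]
  have hdeg : ∀ v, G.degree v ≤ min D (Fintype.card W - 1) := by
    intro v
    refine le_min ?_ ?_
    · have : G.degree v = {u | G.Adj v u}.ncard := by
        rw [← SimpleGraph.card_neighborFinset_eq_degree]
        rw [Set.ncard_eq_toFinset_card']
        congr 1
      rw [this]; exact h v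
    · have := G.degree_lt_card_verts v
      omega
  calc ∑ v, G.degree v ≤ ∑ _v : W, min D (Fintype.card W - 1) :=
        Finset.sum_le_sum fun v _ => hdeg v
    _ = Fintype.card W * min D (Fintype.card W - 1) := by
        rw [Finset.sum_const, Finset.card_univ, smul_eq_mul]

/-- Edge bound for a subgraph of a graph with maximum degree at most `Δ`. -/
lemma FGP_subgraph_bound {V : Type*} [Fintype V] (F : SimpleGraph V) (Δ : ℕ)
    (hF : ∀ v, {u | F.Adj v u}.ncard ≤ Δ) (F₀ : F.Subgraph) :
    2 * F₀.edgeSet.ncard ≤ F₀.verts.ncard * min Δ (F₀.verts.ncard - 1) := by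
  classical
  have hE : F₀.edgeSet.ncard = F₀.coe.edgeSet.ncard := by
    rw [← F₀.image_coe_edgeSet_coe,
      Set.ncard_image_of_injective _ (Sym2.map.injective Subtype.val_injective)]
  have hV : F₀.verts.ncard = Fintype.card F₀.verts := by
    rw [Set.ncard_eq_toFinset_card', Set.toFinset_card]
  rw [hE, hV]
  refine FGP_twice_card_le _ Δ ?_
  intro v
  have himg : Subtype.val '' {u | F₀.coe.Adj v u} ⊆ {u | F.Adj v.1 u} := by
    rintro _ ⟨u, hu, rfl⟩
    exact F₀.adj_sub hu
  calc {u | F₀.coe.Adj v u}.ncard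
      = (Subtype.val '' {u | F₀.coe.Adj v u}).ncard :=
        (Set.ncard_image_of_injective _ Subtype.val_injective).symm
    _ ≤ {u | F.Adj v.1 u}.ncard := Set.ncard_le_ncard himg (Set.toFinite _)
    _ ≤ Δ := hF _

lemma FGP_ncard_prod {α β : Type*} (s : Set α) (t : Set β) :
    (s ×ˢ t).ncard = s.ncard * t.ncard := by
  rw [← Nat.card_coe_set_eq, ← Nat.card_coe_set_eq, ← Nat.card_coe_set_eq,
    Nat.card_congr (Equiv.Set.prod s t), Nat.card_prod]

/-- **Lemma 5.8.** Let `Δ ≥ 3`, let `F` be a graph with maximum degree at most `Δ` and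
let `Γ ⊆ V(F)` with `|Γ| ≤ Δ`. Then `m₁(F_Γ^+) ≤ Δ − 1/2`. -/
theorem m1_FGammaPlus_le {V : Type*} [Fintype V] (Δ : ℕ) (hΔ : 3 ≤ Δ)
    (F : SimpleGraph V) (hF : ∀ v, {u | F.Adj v u}.ncard ≤ Δ)
    (Γ : Set V) (hΓ : Γ.ncard ≤ Δ) :
    m1 (FGammaPlus F Γ) ≤ (Δ : ℝ) - 1 / 2 := by
  classical
  have hΔ0 : (0 : ℝ) ≤ (Δ : ℝ) - 1 / 2 := by
    have : (3 : ℝ) ≤ (Δ : ℝ) := by exact_mod_cast hΔ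
    linarith
  refine Real.sSup_le ?_ hΔ0
  rintro x ⟨F', hv, rfl⟩
  set W := F'.verts with hWdef
  set A' : Set V := Sum.inl ⁻¹' W with hA'
  set B' : Set (Fin 3) := Sum.inr ⁻¹' W with hB'
  -- vertex count
  have hWsplit : W = Sum.inl '' A' ∪ Sum.inr '' B' := by
    ext x
    cases x with
    | inl u => simp [hA', Set.mem_image]
    | inr i => simp [hB', Set.mem_image]
  have hWcard : W.ncard = A'.ncard + B'.ncard := by
    rw [hWsplit, Set.ncard_union_eq, Set.ncard_image_of_injective _ Sum.inl_injective,
      Set.ncard_image_of_injective _ Sum.inr_injective]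
    rw [Set.disjoint_left]
    rintro _ ⟨u, _, rfl⟩ ⟨i, _, h⟩
    exact Sum.inl_ne_inr h.symm
  have hb3 : B'.ncard ≤ 3 := by
    have h := Set.ncard_le_ncard (Set.subset_univ B') (Set.toFinite _)
    rwa [Set.ncard_univ, Nat.card_eq_fintype_card, Fintype.card_fin] at h
  -- the subgraph `F₀` of `F` induced by the `inl`-part of `F'`
  have hadj : ∀ {u v : V}, F'.Adj (Sum.inl u) (Sum.inl v) → F.Adj u v := by
    intro u v h
    have h2 := F'.adj_sub h
    rw [FGammaPlus, SimpleGraph.fromRel_adj] at h2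
    rcases h2.2 with h3 | h3
    · exact h3
    · exact h3.symm
  set F₀ : F.Subgraph :=
    { verts := A'
      Adj := fun u v => F'.Adj (Sum.inl u) (Sum.inl v)
      adj_sub := fun h => hadj h
      edge_vert := fun h => F'.edge_vert h
      symm := ⟨fun u v h => F'.adj_symm h⟩ } with hF₀
  -- partition the edges of `F'`
  set p : Sym2 (V ⊕ Fin 3) → Prop := fun e => ∀ x ∈ e, x.isLeft with hp
  have hE1 : {e ∈ F'.edgeSet | p e} = Sym2.map Sum.inl '' F₀.edgeSet := by
    ext e
    induction e with
    | _ x y =>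
      constructor
      · rintro ⟨he, hpe⟩
        have hx := hpe x (Sym2.mem_mk_left x y)
        have hy := hpe y (Sym2.mem_mk_right x y)
        cases x with
        | inl u =>
          cases y with
          | inl v => exact ⟨s(u, v), he, rfl⟩
          | inr i => simp at hy
        | inr i => simp at hx
      · rintro ⟨e', he', hee⟩
        induction e' with
        | _ u v =>
          rw [Sym2.map_pair_eq] at hee
          rw [← hee]
          refine ⟨he', ?_⟩
          intro z hz
          rw [Sym2.mem_iff] at hz
          rcases hz with rfl | rfl <;> rfl
  have hE1card : {e ∈ F'.edgeSet | p e}.ncard = F₀.edgeSet.ncard := by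
    rw [hE1, Set.ncard_image_of_injective _ (Sym2.map.injective Sum.inl_injective)]
  have hE2 : {e ∈ F'.edgeSet | ¬ p e} ⊆
      (fun q : Fin 3 × V => s(Sum.inr q.1, Sum.inl q.2)) '' (B' ×ˢ (Γ ∩ A')) := by
    rintro e ⟨he, hpe⟩
    induction e with
    | _ x y =>
      have hadj' := he
      rw [SimpleGraph.Subgraph.mem_edgeSet] at hadj'
      have hGadj := F'.adj_sub hadj'
      rw [FGammaPlus, SimpleGraph.fromRel_adj] at hGadj
      cases x with
      | inl u =>
        cases y with
        | inl v =>
          exfalso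
          apply hpe
          intro z hz
          rw [Sym2.mem_iff] at hz
          rcases hz with rfl | rfl <;> rfl
        | inr i =>
          have hu : u ∈ Γ := by
            rcases hGadj.2 with h | h
            · exact h
            · exact h.elim
          refine ⟨(i, u), ⟨F'.edge_vert hadj'.symm, hu, F'.edge_vert hadj'⟩, ?_⟩
          simp [Sym2.eq_swap]
      | inr i =>
        cases y with
        | inl u =>
          have hu : u ∈ Γ := by
            rcases hGadj.2 with h | h
            · exact h.elim
            · exact h
          exact ⟨(i, u), ⟨F'.edge_vert hadj', hu, F'.edge_vert hadj'.symm⟩, rfl⟩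
        | inr j =>
          exfalso
          rcases hGadj.2 with h | h <;> exact h.elim
  -- count the edges
  have hsplitE : F'.edgeSet = {e ∈ F'.edgeSet | p e} ∪ {e ∈ F'.edgeSet | ¬ p e} := by
    ext e
    simp only [Set.mem_union, Set.mem_setOf_eq]
    tauto
  have hEcard : F'.edgeSet.ncard
      = {e ∈ F'.edgeSet | p e}.ncard + {e ∈ F'.edgeSet | ¬ p e}.ncard := by
    have hd : Disjoint {e ∈ F'.edgeSet | p e} {e ∈ F'.edgeSet | ¬ p e} := by
      rw [Set.disjoint_left]
      rintro e ⟨_, hpe⟩ ⟨_, hnpe⟩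
      exact hnpe hpe
    have h := Set.ncard_union_eq hd (Set.toFinite _) (Set.toFinite _)
    rw [← hsplitE] at h
    exact h
  have hE2card : {e ∈ F'.edgeSet | ¬ p e}.ncard ≤ B'.ncard * min Δ A'.ncard := by
    calc {e ∈ F'.edgeSet | ¬ p e}.ncard
        ≤ ((fun q : Fin 3 × V => s(Sum.inr q.1, Sum.inl q.2)) '' (B' ×ˢ (Γ ∩ A'))).ncard :=
          Set.ncard_le_ncard hE2 (Set.toFinite _)
      _ ≤ (B' ×ˢ (Γ ∩ A')).ncard := Set.ncard_image_le (Set.toFinite _)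
      _ = B'.ncard * (Γ ∩ A').ncard := FGP_ncard_prod _ _
      _ ≤ B'.ncard * min Δ A'.ncard := by
          refine Nat.mul_le_mul_left _ (le_min ?_ ?_)
          · exact le_trans (Set.ncard_inter_le_ncard_left _ _ (Set.toFinite _)) hΓ
          · exact Set.ncard_inter_le_ncard_right _ _ (Set.toFinite _)
  have hE1bound : 2 * F₀.edgeSet.ncard ≤ A'.ncard * min Δ (A'.ncard - 1) := by
    have := FGP_subgraph_bound F Δ hF F₀
    simpa using this
  -- the key natural-number inequality
  have hab : 2 ≤ A'.ncard + B'.ncard := by rw [← hWcard]; exact hv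
  have key : 2 * F'.edgeSet.ncard ≤ (2 * Δ - 1) * (W.ncard - 1) := by
    rw [hEcard, hWcard]
    calc 2 * ({e ∈ F'.edgeSet | p e}.ncard + {e ∈ F'.edgeSet | ¬ p e}.ncard)
        = 2 * F₀.edgeSet.ncard + 2 * {e ∈ F'.edgeSet | ¬ p e}.ncard := by
          rw [hE1card]; ring
      _ ≤ A'.ncard * min Δ (A'.ncard - 1) + 2 * (B'.ncard * min Δ A'.ncard) := by
          have := hE2card
          omega
      _ ≤ (2 * Δ - 1) * (A'.ncard + B'.ncard - 1) := FGP_arith Δ _ _ hΔ hb3 hab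
  -- conclude over the reals
  have hv1 : (1 : ℝ) ≤ (W.ncard : ℝ) - 1 := by
    have : (2 : ℝ) ≤ (W.ncard : ℝ) := by exact_mod_cast hv
    linarith
  have hvpos : (0 : ℝ) < (W.ncard : ℝ) - 1 := by linarith
  rw [div_le_iff₀ hvpos]
  have keyR : 2 * (F'.edgeSet.ncard : ℝ) ≤ (2 * (Δ : ℝ) - 1) * ((W.ncard : ℝ) - 1) := by
    have h1 : ((2 * F'.edgeSet.ncard : ℕ) : ℝ) ≤ (((2 * Δ - 1) * (W.ncard - 1) : ℕ) : ℝ) := by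
      exact_mod_cast key
    have h2 : (1 : ℕ) ≤ 2 * Δ := by omega
    have h3 : (1 : ℕ) ≤ W.ncard := by omega
    push_cast [Nat.cast_sub h2, Nat.cast_sub h3] at h1
    convert h1 using 2 <;> push_cast <;> ring
  nlinarith
end
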